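/- arXiv:1004.4141 — 3 statements merged into one kernel-verified Lean document; each statement's English description precedes it below -/
import Mathlib

section
/- Let λ > 0 and let u ∈ C²[0,m] satisfy h(s) = u(s) − λ((d(s)u'(s))' − (γ(s)u(s))' − μ(s)u(s) − ωu(s)) on (0,m). Multiplying by the sign of the positive part and integrating, one obtains ‖u⁺‖₁ ≤ λ(sgn(u⁺(m))d(m)u'(m) − sgn(u⁺(0))d(0)u'(0)) − λ(sgn(u⁺(m))γ(m)u(m) − sgn(u⁺(0))γ(0)u(0)) − λ∫₀ᵐ χ_{u⁺}(s)μ(s)u(s) ds − λω‖u⁺‖₁ + ∫₀ᵐ χ_{u⁺}(s)h(s) ds, where χ_{u⁺} is the indicator of the set {u > 0}. -/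
open MeasureTheory intervalIntegral

section AuxSmoothTransition

open Real Filter


lemma expNegInvGlue_mono : Monotone expNegInvGlue := by
  intro x y hxy
  rcases le_or_gt x 0 with hx | hx
  · rw [expNegInvGlue.zero_of_nonpos hx]; exact expNegInvGlue.nonneg y
  · have hy : 0 < y := hx.trans_le hxy
    unfold expNegInvGlue
    rw [if_neg hx.not_ge, if_neg hy.not_ge]
    exact Real.exp_le_exp.2 (by simp only [neg_le_neg_iff]; gcongr)

lemma smoothTransition_mono : Monotone Real.smoothTransition := by
  intro x y hxy
  unfold Real.smoothTransition
  rw [div_le_div_iff₀ (Real.smoothTransition.pos_denom x) (Real.smoothTransition.pos_denom y)]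
  have h1 := expNegInvGlue_mono hxy
  have h2 : expNegInvGlue (1 - y) ≤ expNegInvGlue (1 - x) := expNegInvGlue_mono (by linarith)
  nlinarith [expNegInvGlue.nonneg x, expNegInvGlue.nonneg (1 - y), expNegInvGlue.nonneg y,
    expNegInvGlue.nonneg (1 - x)]

lemma smoothTransition_differentiable : Differentiable ℝ Real.smoothTransition :=
  (Real.smoothTransition.contDiff (n := 1)).differentiable (by norm_num)

lemma deriv_nonneg_of_monotone {f : ℝ → ℝ} (hf : Monotone f) {x : ℝ}
    (hd : DifferentiableAt ℝ f x) : 0 ≤ deriv f x := by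
  have h := hd.hasDerivAt
  rw [hasDerivAt_iff_tendsto_slope] at h
  refine ge_of_tendsto' h fun y => ?_
  rcases lt_trichotomy y x with hy | rfl | hy
  · have : f y ≤ f x := hf hy.le
    rw [slope_def_field]
    apply div_nonneg_of_nonpos <;> linarith
  · simp [slope_def_field]
  · have : f x ≤ f y := hf hy.le
    rw [slope_def_field]
    apply div_nonneg <;> linarith

lemma derivT_nonneg (x : ℝ) : 0 ≤ deriv Real.smoothTransition x :=
  deriv_nonneg_of_monotone smoothTransition_mono (smoothTransition_differentiable x)

lemma derivT_zero_of_nonpos {x : ℝ} (hx : x ≤ 0) : deriv Real.smoothTransition x = 0 := by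
  rcases lt_or_eq_of_le hx with hx | rfl
  · have hev : Real.smoothTransition =ᶠ[nhds x] (fun _ => (0:ℝ)) := by
      filter_upwards [Iio_mem_nhds hx] with y hy
      exact Real.smoothTransition.zero_of_nonpos hy.le
    rw [hev.deriv_eq, deriv_const]
  · have hmin : IsLocalMin Real.smoothTransition 0 := by
      apply Filter.Eventually.of_forall
      intro y
      rw [Real.smoothTransition.zero]
      exact Real.smoothTransition.nonneg y
    exact hmin.deriv_eq_zero

lemma derivT_zero_of_one_lt {x : ℝ} (hx : 1 < x) : deriv Real.smoothTransition x = 0 := by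
  have hev : Real.smoothTransition =ᶠ[nhds x] (fun _ => (1:ℝ)) := by
    filter_upwards [Ioi_mem_nhds hx] with y hy
    exact Real.smoothTransition.one_of_one_le hy.le
  rw [hev.deriv_eq, deriv_const]

lemma derivT_bound : ∃ K : ℝ, 0 ≤ K ∧ ∀ x, deriv Real.smoothTransition x ≤ K := by
  have hc : ContinuousOn (deriv Real.smoothTransition) (Set.Icc (0:ℝ) 1) :=
    ((Real.smoothTransition.contDiff (n := 1)).continuous_deriv le_rfl).continuousOn
  obtain ⟨x0, _, hx0⟩ := isCompact_Icc.exists_isMaxOn (by norm_num : (Set.Icc (0:ℝ) 1).Nonempty) hc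
  refine ⟨deriv Real.smoothTransition x0, le_trans (by simpa using derivT_nonneg x0) le_rfl, fun x => ?_⟩
  rcases le_or_gt x 0 with hx | hx
  · rw [derivT_zero_of_nonpos hx]; exact derivT_nonneg x0
  rcases le_or_gt x 1 with hx1 | hx1
  · exact hx0 ⟨hx.le, hx1⟩
  · rw [derivT_zero_of_one_lt hx1]; exact derivT_nonneg x0

lemma aux_tendsto_atTop {a : ℝ} (ha : 0 < a) :
    Tendsto (fun n : ℕ => ((n:ℝ)+1) * a) atTop atTop :=
  Tendsto.atTop_mul_const ha (tendsto_atTop_add_const_right _ _ tendsto_natCast_atTop_atTop)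

lemma T_seq_tendsto (a : ℝ) :
    Tendsto (fun n : ℕ => Real.smoothTransition (((n:ℝ)+1) * a)) atTop
      (nhds (if 0 < a then (1:ℝ) else 0)) := by
  rcases le_or_gt a 0 with ha | ha
  · have h : ∀ n : ℕ, Real.smoothTransition (((n:ℝ)+1) * a) = if 0 < a then (1:ℝ) else 0 := by
      intro n
      rw [Real.smoothTransition.zero_of_nonpos
        (mul_nonpos_of_nonneg_of_nonpos (by positivity) ha), if_neg ha.not_gt]
    exact Tendsto.congr (fun n => (h n).symm) tendsto_const_nhds
  · have hev : (fun _ : ℕ => if 0 < a then (1:ℝ) else 0)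
        =ᶠ[atTop] fun n : ℕ => Real.smoothTransition (((n:ℝ)+1) * a) := by
      filter_upwards [(aux_tendsto_atTop ha).eventually_ge_atTop 1] with n hn
      rw [Real.smoothTransition.one_of_one_le hn, if_pos ha]
    exact Tendsto.congr' hev tendsto_const_nhds

lemma Phi_seq_tendsto (a : ℝ) :
    Tendsto (fun n : ℕ => deriv Real.smoothTransition (((n:ℝ)+1) * a) * (((n:ℝ)+1) * a))
      atTop (nhds 0) := by
  rcases le_or_gt a 0 with ha | ha
  · have h : ∀ n : ℕ, deriv Real.smoothTransition (((n:ℝ)+1) * a) * (((n:ℝ)+1) * a) = 0 := by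
      intro n
      rw [derivT_zero_of_nonpos (mul_nonpos_of_nonneg_of_nonpos (by positivity) ha), zero_mul]
    exact Tendsto.congr (fun n => (h n).symm) tendsto_const_nhds
  · have hev : (fun _ : ℕ => (0:ℝ))
        =ᶠ[atTop] fun n : ℕ =>
          deriv Real.smoothTransition (((n:ℝ)+1) * a) * (((n:ℝ)+1) * a) := by
      filter_upwards [(aux_tendsto_atTop ha).eventually_gt_atTop 1] with n hn
      rw [derivT_zero_of_one_lt hn, zero_mul]
    exact Tendsto.congr' hev tendsto_const_nhds

set_option maxHeartbeats 1000000 in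
lemma key_estimate (m : ℝ) (hm : 0 < m) (d γ : ℝ → ℝ) (hd : ContDiff ℝ 1 d) (hγ : ContDiff ℝ 1 γ)
    (hdpos : ∀ s ∈ Set.Icc (0:ℝ) m, 0 ≤ d s)
    (u : ℝ → ℝ) (hu : ContDiff ℝ 2 u) :
    (∫ s in (0:ℝ)..m, (if 0 < u s then (1:ℝ) else 0) *
        deriv (fun σ => d σ * deriv u σ - γ σ * u σ) s)
      ≤ (if 0 < u m then (1:ℝ) else 0) * (d m * deriv u m - γ m * u m)
        - (if 0 < u 0 then (1:ℝ) else 0) * (d 0 * deriv u 0 - γ 0 * u 0) := by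
  obtain ⟨K, hK0, hK⟩ := derivT_bound
  have hTc : ContDiff ℝ 1 Real.smoothTransition := Real.smoothTransition.contDiff (n := 1)
  have hT'cont : Continuous (deriv Real.smoothTransition) := hTc.continuous_deriv le_rfl
  have hu1 : ContDiff ℝ 1 u := hu.of_le (by norm_num)
  have hu' : ContDiff ℝ 1 (deriv u) := by
    have h2 : ContDiff ℝ (1 + 1 : ℕ) u := by exact_mod_cast hu
    exact ((contDiff_succ_iff_deriv (n := 1)).1 (by exact_mod_cast h2)).2.2
  set v : ℝ → ℝ := fun σ => d σ * deriv u σ - γ σ * u σ with hv_def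
  have hv : ContDiff ℝ 1 v := (hd.mul hu').sub (hγ.mul hu1)
  have hvd : Differentiable ℝ v := hv.differentiable (by norm_num)
  have hv'cont : Continuous (deriv v) := hv.continuous_deriv le_rfl
  have hvcont : Continuous v := hv.continuous
  have hucont : Continuous u := hu.continuous
  have hu'cont : Continuous (deriv u) := hu'.continuous
  set χ : ℝ → ℝ := fun s => if 0 < u s then (1:ℝ) else 0 with hχ
  set c : ℕ → ℝ := fun n => (n : ℝ) + 1 with hc
  have hcpos : ∀ n, 0 < c n := fun n => by positivity
  set A : ℕ → ℝ → ℝ := fun n s => Real.smoothTransition (c n * u s) with hA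
  set A' : ℕ → ℝ → ℝ := fun n s =>
    deriv Real.smoothTransition (c n * u s) * (c n * deriv u s) with hA'
  have hAderiv : ∀ n s, HasDerivAt (A n) (A' n s) s := by
    intro n s
    have hin : HasDerivAt (fun s => c n * u s) (c n * deriv u s) s :=
      ((hu1.differentiable (by norm_num) s).hasDerivAt).const_mul (c n)
    exact ((hTc.differentiable (by norm_num) _).hasDerivAt).comp s hin
  have hAcont : ∀ n, Continuous (A n) := fun n =>
    Real.smoothTransition.continuous.comp (continuous_const.mul hucont)
  have hA'cont : ∀ n, Continuous (A' n) := fun n =>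
    (hT'cont.comp (continuous_const.mul hucont)).mul (continuous_const.mul hu'cont)
  have ibp : ∀ n, ∫ s in (0:ℝ)..m, A n s * deriv v s
      = A n m * v m - A n 0 * v 0 - ∫ s in (0:ℝ)..m, A' n s * v s := by
    intro n
    exact integral_mul_deriv_eq_deriv_mul
      (fun x _ => hAderiv n x) (fun x _ => (hvd x).hasDerivAt)
      ((hA'cont n).intervalIntegrable 0 m) (hv'cont.intervalIntegrable 0 m)
  set q : ℕ → ℝ → ℝ := fun n s =>
    (deriv Real.smoothTransition (c n * u s) * (c n * u s)) * (γ s * deriv u s) with hq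
  have hqcont : ∀ n, Continuous (q n) := fun n =>
    (((hT'cont.comp (continuous_const.mul hucont)).mul (continuous_const.mul hucont)).mul
      (hγ.continuous.mul hu'cont))
  have hΦ : ∀ x : ℝ, 0 ≤ deriv Real.smoothTransition x * x
      ∧ deriv Real.smoothTransition x * x ≤ K := by
    intro x
    rcases le_or_gt x 0 with hx | hx
    · rw [derivT_zero_of_nonpos hx]; simp [hK0]
    rcases le_or_gt x 1 with hx1 | hx1
    · refine ⟨mul_nonneg (derivT_nonneg x) hx.le, ?_⟩
      calc deriv Real.smoothTransition x * x ≤ deriv Real.smoothTransition x * 1 :=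
            mul_le_mul_of_nonneg_left hx1 (derivT_nonneg x)
        _ ≤ K := by rw [mul_one]; exact hK x
    · rw [derivT_zero_of_one_lt hx1]; simp [hK0]
  have herr : ∀ n, - (∫ s in (0:ℝ)..m, |q n s|) ≤ ∫ s in (0:ℝ)..m, A' n s * v s := by
    intro n
    rw [← intervalIntegral.integral_neg]
    apply intervalIntegral.integral_mono_on hm.le
      ((hqcont n).abs.neg.intervalIntegrable 0 m)
      (((hA'cont n).mul hvcont).intervalIntegrable 0 m)
    intro s hs
    have h1 : 0 ≤ deriv Real.smoothTransition (c n * u s) * c n * (deriv u s)^2 * d s := by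
      have hd1 := derivT_nonneg (c n * u s)
      have hd2 := hdpos s hs
      have hd3 := (hcpos n).le
      positivity
    have h2 : A' n s * v s =
        deriv Real.smoothTransition (c n * u s) * c n * (deriv u s)^2 * d s - q n s := by
      simp only [hA', hq, hv_def]; ring
    have h3 : q n s ≤ |q n s| := le_abs_self _
    show -|q n s| ≤ A' n s * v s; rw [h2]; linarith
  have hmain : ∀ n, (∫ s in (0:ℝ)..m, A n s * deriv v s)
      ≤ (A n m * v m - A n 0 * v 0) + ∫ s in (0:ℝ)..m, |q n s| := by
    intro n
    rw [ibp n]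
    have := herr n
    linarith
  have hpt : ∀ y : ℝ, Tendsto (fun n => A n y) atTop (nhds (χ y)) := fun y => T_seq_tendsto (u y)
  have hL : Tendsto (fun n => ∫ s in (0:ℝ)..m, A n s * deriv v s) atTop
      (nhds (∫ s in (0:ℝ)..m, χ s * deriv v s)) := by
    apply intervalIntegral.tendsto_integral_filter_of_dominated_convergence
      (fun s => |deriv v s|)
    · exact Eventually.of_forall fun n => (((hAcont n).mul hv'cont).aestronglyMeasurable)
    · refine Eventually.of_forall fun n => Eventually.of_forall fun x _ => ?_
      have h1 : |A n x| ≤ 1 := by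
        rw [abs_le]
        exact ⟨by linarith [Real.smoothTransition.nonneg (c n * u x)],
          Real.smoothTransition.le_one (c n * u x)⟩
      calc ‖A n x * deriv v x‖ = |A n x| * |deriv v x| := abs_mul _ _
        _ ≤ 1 * |deriv v x| := mul_le_mul_of_nonneg_right h1 (abs_nonneg _)
        _ = |deriv v x| := one_mul _
    · exact hv'cont.abs.intervalIntegrable 0 m
    · exact Eventually.of_forall fun x _ => (hpt x).mul_const (deriv v x)
  have hRbdry : Tendsto (fun n => A n m * v m - A n 0 * v 0) atTop
      (nhds (χ m * v m - χ 0 * v 0)) :=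
    ((hpt m).mul_const (v m)).sub ((hpt 0).mul_const (v 0))
  have hRerr : Tendsto (fun n => ∫ s in (0:ℝ)..m, |q n s|) atTop (nhds 0) := by
    have h0 : Tendsto (fun n => ∫ s in (0:ℝ)..m, |q n s|) atTop
        (nhds (∫ s in (0:ℝ)..m, (0:ℝ))) := by
      apply intervalIntegral.tendsto_integral_filter_of_dominated_convergence
        (fun s => K * |γ s * deriv u s|)
      · exact Eventually.of_forall fun n => (hqcont n).abs.aestronglyMeasurable
      · refine Eventually.of_forall fun n => Eventually.of_forall fun x _ => ?_
        have h1 := hΦ (c n * u x)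
        have h2 : |q n x| ≤ K * |γ x * deriv u x| := by
          rw [hq]
          simp only
          rw [abs_mul]
          refine mul_le_mul_of_nonneg_right ?_ (abs_nonneg _)
          rw [abs_of_nonneg h1.1]
          exact h1.2
        simpa [Real.norm_eq_abs, abs_abs] using h2
      · exact (continuous_const.mul ((hγ.continuous.mul hu'cont).abs)).intervalIntegrable 0 m
      · refine Eventually.of_forall fun x _ => ?_
        have := ((Phi_seq_tendsto (u x)).mul_const (γ x * deriv u x)).abs
        simpa [hq, hc] using this
    simpa using h0
  have hR : Tendsto (fun n => (A n m * v m - A n 0 * v 0) + ∫ s in (0:ℝ)..m, |q n s|) atTop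
      (nhds ((χ m * v m - χ 0 * v 0) + 0)) := hRbdry.add hRerr
  rw [add_zero] at hR
  exact le_of_tendsto_of_tendsto' hL hR hmain


end AuxSmoothTransition

set_option maxHeartbeats 1000000 in
/-- The positive-part estimate in the dissipativity proof: multiplying the resolvent
equation by the indicator of `{u > 0}` and integrating over `(0,m)` yields an upper bound
for `‖u⁺‖₁` in terms of boundary fluxes, drift, mortality, and the data `h`. -/
theorem positive_part_estimate (m : ℝ) (hm : 0 < m)
    (d γ μ : ℝ → ℝ) (hd : ContDiff ℝ 1 d) (hγ : ContDiff ℝ 1 γ)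
    (hdpos : ∀ s ∈ Set.Icc (0:ℝ) m, 0 < d s)
    (hμ : Continuous μ) (hμpos : ∀ s ∈ Set.Icc (0:ℝ) m, 0 ≤ μ s)
    (ω lam : ℝ) (hlam : 0 < lam)
    (u : ℝ → ℝ) (hu : ContDiff ℝ 2 u)
    (h : ℝ → ℝ)
    (hres : ∀ s ∈ Set.Ioo (0:ℝ) m,
      h s = u s - lam * (deriv (fun σ => d σ * deriv u σ) s
        - deriv (fun σ => γ σ * u σ) s - μ s * u s - ω * u s)) :
    (∫ s in (0)..m, max (u s) 0)
      ≤ lam * ((if 0 < u m then (1:ℝ) else 0) * d m * deriv u m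
          - (if 0 < u 0 then (1:ℝ) else 0) * d 0 * deriv u 0)
        - lam * ((if 0 < u m then (1:ℝ) else 0) * γ m * u m
          - (if 0 < u 0 then (1:ℝ) else 0) * γ 0 * u 0)
        - lam * (∫ s in (0)..m, (if 0 < u s then (1:ℝ) else 0) * μ s * u s)
        - lam * ω * (∫ s in (0)..m, max (u s) 0)
        + ∫ s in (0)..m, (if 0 < u s then (1:ℝ) else 0) * h s := by
  have hu1 : ContDiff ℝ 1 u := hu.of_le (by norm_num)
  have hu' : ContDiff ℝ 1 (deriv u) := by
    have h2 : ContDiff ℝ (1 + 1 : ℕ) u := by exact_mod_cast hu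
    exact ((contDiff_succ_iff_deriv (n := 1)).1 (by exact_mod_cast h2)).2.2
  have hucont : Continuous u := hu.continuous
  have hu'cont : Continuous (deriv u) := hu'.continuous
  have hDu : ContDiff ℝ 1 (fun σ => d σ * deriv u σ) := hd.mul hu'
  have hGu : ContDiff ℝ 1 (fun σ => γ σ * u σ) := hγ.mul hu1
  set F : ℝ → ℝ := fun s => deriv (fun σ => d σ * deriv u σ) s with hF_def
  set G : ℝ → ℝ := fun s => deriv (fun σ => γ σ * u σ) s with hG_def
  have hFcont : Continuous F := hDu.continuous_deriv le_rfl
  have hGcont : Continuous G := hGu.continuous_deriv le_rfl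
  set χ : ℝ → ℝ := fun s => if 0 < u s then (1:ℝ) else 0 with hχ_def
  -- integrability helper
  have hχmeas : Measurable χ := by
    apply Measurable.ite _ measurable_const measurable_const
    exact measurableSet_lt measurable_const hucont.measurable
  have hint : ∀ f : ℝ → ℝ, Continuous f →
      IntervalIntegrable (fun s => χ s * f s) volume 0 m := by
    intro f hf
    apply (hf.intervalIntegrable 0 m).mono_fun
      ((hχmeas.mul hf.measurable).aestronglyMeasurable)
    apply Filter.Eventually.of_forall
    intro x
    simp only [Real.norm_eq_abs, abs_mul]
    rcases lt_or_ge 0 (u x) with hx | hx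
    · rw [hχ_def]; simp [hx]
    · rw [hχ_def]; simp [not_lt.2 hx, abs_nonneg]
  -- the data integral: rewrite using the resolvent identity
  have hae : ∀ᵐ x : ℝ, x ≠ m := by
    rw [MeasureTheory.ae_iff]
    have : {x : ℝ | ¬x ≠ m} = {m} := by ext x; simp
    rw [this]
    exact measure_singleton m
  have hIh : (∫ s in (0:ℝ)..m, χ s * h s)
      = ∫ s in (0:ℝ)..m, χ s * (u s - lam * (F s - G s - μ s * u s - ω * u s)) := by
    apply intervalIntegral.integral_congr_ae
    filter_upwards [hae] with x hx hmem
    rw [Set.uIoc_of_le hm.le] at hmem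
    have hxIoo : x ∈ Set.Ioo (0:ℝ) m := ⟨hmem.1, lt_of_le_of_ne hmem.2 hx⟩
    rw [hres x hxIoo]
  -- split the right-hand side
  have hIsplit : (∫ s in (0:ℝ)..m, χ s * (u s - lam * (F s - G s - μ s * u s - ω * u s)))
      = (∫ s in (0:ℝ)..m, χ s * u s) - lam * (∫ s in (0:ℝ)..m, χ s * F s)
        + lam * (∫ s in (0:ℝ)..m, χ s * G s)
        + lam * (∫ s in (0:ℝ)..m, χ s * (μ s * u s))
        + lam * ω * (∫ s in (0:ℝ)..m, χ s * u s) := by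
    have e1 : (∫ s in (0:ℝ)..m, χ s * (u s - lam * (F s - G s - μ s * u s - ω * u s)))
        = ∫ s in (0:ℝ)..m, (χ s * u s - lam * (χ s * F s) + lam * (χ s * G s)
            + lam * (χ s * (μ s * u s)) + lam * ω * (χ s * u s)) := by
      apply intervalIntegral.integral_congr
      intro s _
      ring
    rw [e1]
    have i1 := hint u hucont
    have i2 := (hint F hFcont).const_mul lam
    have i3 := (hint G hGcont).const_mul lam
    have i4 := (hint (fun s => μ s * u s) (hμ.mul hucont)).const_mul lam
    have i5 := (hint u hucont).const_mul (lam * ω)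
    rw [intervalIntegral.integral_add ((((i1.sub i2).add i3)).add i4) i5,
      intervalIntegral.integral_add ((i1.sub i2).add i3) i4,
      intervalIntegral.integral_add (i1.sub i2) i3,
      intervalIntegral.integral_sub i1 i2,
      intervalIntegral.integral_const_mul, intervalIntegral.integral_const_mul,
      intervalIntegral.integral_const_mul, intervalIntegral.integral_const_mul]
  -- χ * u = max u 0
  have hmax : (∫ s in (0:ℝ)..m, χ s * u s) = ∫ s in (0:ℝ)..m, max (u s) 0 := by
    apply intervalIntegral.integral_congr
    intro s _
    rcases lt_or_ge 0 (u s) with hs | hs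
    · rw [hχ_def]; simp [hs, max_eq_left hs.le]
    · rw [hχ_def]; simp [not_lt.2 hs, max_eq_right hs]
  -- μ-term congruence with the goal's form
  have hμcongr : (∫ s in (0:ℝ)..m, χ s * μ s * u s)
      = ∫ s in (0:ℝ)..m, χ s * (μ s * u s) := by
    apply intervalIntegral.integral_congr
    intro s _
    ring
  -- the key inequality
  have hkey := key_estimate m hm d γ hd hγ (fun s hs => (hdpos s hs).le) u hu
  have hderiv_sub : ∀ s : ℝ, deriv (fun σ => d σ * deriv u σ - γ σ * u σ) s = F s - G s := by
    intro s
    rw [hF_def, hG_def]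
    exact deriv_fun_sub ((hDu.differentiable (by norm_num)) s) ((hGu.differentiable (by norm_num)) s)
  have hkey2 : (∫ s in (0:ℝ)..m, χ s * F s) - (∫ s in (0:ℝ)..m, χ s * G s)
      ≤ (if 0 < u m then (1:ℝ) else 0) * (d m * deriv u m - γ m * u m)
        - (if 0 < u 0 then (1:ℝ) else 0) * (d 0 * deriv u 0 - γ 0 * u 0) := by
    have e2 : (∫ s in (0:ℝ)..m, (if 0 < u s then (1:ℝ) else 0) *
        deriv (fun σ => d σ * deriv u σ - γ σ * u σ) s)
        = (∫ s in (0:ℝ)..m, χ s * F s) - (∫ s in (0:ℝ)..m, χ s * G s) := by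
      rw [← intervalIntegral.integral_sub (hint F hFcont) (hint G hGcont)]
      apply intervalIntegral.integral_congr
      intro s _
      beta_reduce
      rw [hderiv_sub s, hχ_def]
      ring
    rw [← e2]
    exact hkey
  have hkey3 := mul_le_mul_of_nonneg_left hkey2 hlam.le
  -- finish
  rw [← hmax, hIh, hIsplit, hμcongr]
  set IF := (∫ s in (0:ℝ)..m, χ s * F s)
  set IG := (∫ s in (0:ℝ)..m, χ s * G s)
  set I1 := (∫ s in (0:ℝ)..m, χ s * u s)
  set Iμ := (∫ s in (0:ℝ)..m, χ s * (μ s * u s))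
  set Pm := (if 0 < u m then (1:ℝ) else 0)
  set P0 := (if 0 < u 0 then (1:ℝ) else 0)
  nlinarith [hkey3]
end

section
/- Under the hypotheses that c₁ = d(0)/(b₀ − γ(0)) > 0 and c₂ = d(m)/(γ(m) + b_m) > 0, there exists ω ∈ ℝ such that for all λ > 0 and all u ∈ D(Ã), ‖u‖_𝒳 ≤ ‖u − λ(Ã − ωI)u‖_𝒳; i.e., the operator Ã − ωI is dissipative on 𝒳 = L¹(0,m) ⊕ ℝ² with the weighted norm ‖(x,x₀,x_m)‖ = ‖x‖₁ + c₁|x₀| + c₂|x_m|. -/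
open MeasureTheory intervalIntegral

namespace DissAux

noncomputable def g (ε r : ℝ) : ℝ := Real.sqrt (r^2 + ε^2)
noncomputable def phi (ε r : ℝ) : ℝ := r / g ε r
noncomputable def phi' (ε r : ℝ) : ℝ := ε^2 / (g ε r)^3
noncomputable def psi (ε r : ℝ) : ℝ := ε - ε^2 / g ε r

lemma g_pos {ε : ℝ} (hε : 0 < ε) (r : ℝ) : 0 < g ε r :=
  Real.sqrt_pos.mpr (by positivity)

lemma g_sq (ε r : ℝ) : (g ε r)^2 = r^2 + ε^2 := Real.sq_sqrt (by positivity)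

lemma abs_le_g (ε r : ℝ) : |r| ≤ g ε r := by
  rw [g, ← Real.sqrt_sq_eq_abs]
  exact Real.sqrt_le_sqrt (by nlinarith [sq_nonneg ε])

lemma g_le {ε : ℝ} (hε : 0 < ε) (r : ℝ) : g ε r ≤ |r| + ε := by
  rw [g, show |r| + ε = Real.sqrt ((|r| + ε)^2) from
    (Real.sqrt_sq (by positivity)).symm]
  exact Real.sqrt_le_sqrt (by nlinarith [abs_nonneg r, sq_abs r, hε.le])

lemma abs_phi_le_one {ε : ℝ} (hε : 0 < ε) (r : ℝ) : |phi ε r| ≤ 1 := by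
  rw [phi, abs_div, abs_of_pos (g_pos hε r), div_le_one (g_pos hε r)]
  exact abs_le_g ε r

lemma phi_mul_nonneg {ε : ℝ} (hε : 0 < ε) (r : ℝ) : 0 ≤ phi ε r * r := by
  have := g_pos hε r
  rw [phi, div_mul_eq_mul_div]
  exact div_nonneg (mul_self_nonneg r) this.le

lemma abs_sub_le_phi_mul {ε : ℝ} (hε : 0 < ε) (r : ℝ) : |r| - ε ≤ phi ε r * r := by
  rcases le_or_gt |r| ε with h | h
  · linarith [phi_mul_nonneg hε r]
  · rw [phi, div_mul_eq_mul_div, le_div_iff₀ (g_pos hε r)]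
    have h2 := g_le hε r
    nlinarith [g_pos hε r, sq_abs r, abs_nonneg r]

lemma eps_le_g {ε : ℝ} (hε : 0 < ε) (r : ℝ) : ε ≤ g ε r := by
  rw [g, show ε = Real.sqrt (ε^2) from (Real.sqrt_sq hε.le).symm]
  exact Real.sqrt_le_sqrt (by nlinarith [sq_nonneg r, Real.sq_sqrt (sq_nonneg ε)])

lemma psi_nonneg {ε : ℝ} (hε : 0 < ε) (r : ℝ) : 0 ≤ psi ε r := by
  have h1 := eps_le_g hε r
  rw [psi, sub_nonneg, div_le_iff₀ (g_pos hε r)]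
  nlinarith

lemma psi_le {ε : ℝ} (hε : 0 < ε) (r : ℝ) : psi ε r ≤ ε := by
  have h1 := g_pos hε r
  have : 0 < ε^2 / g ε r := by positivity
  rw [psi]; linarith

lemma hasDerivAt_g {ε : ℝ} (hε : 0 < ε) (r : ℝ) :
    HasDerivAt (g ε) (r / g ε r) r := by
  have h1 : HasDerivAt (fun r : ℝ => r^2 + ε^2) (2*r) r := by
    simpa using (hasDerivAt_pow 2 r).add_const (ε^2)
  have h2 := h1.sqrt (by positivity)
  have hg := g_pos hε r
  refine h2.congr_deriv ?_
  symm
  rw [g] at hg ⊢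
  field_simp

lemma hasDerivAt_phi {ε : ℝ} (hε : 0 < ε) (r : ℝ) :
    HasDerivAt (phi ε) (phi' ε r) r := by
  have h := (hasDerivAt_id r).div (hasDerivAt_g hε r) (g_pos hε r).ne'
  refine h.congr_deriv ?_
  symm
  have hg := g_pos hε r
  have hsq := g_sq ε r
  simp only [phi', id]
  field_simp
  linear_combination (-1) * hsq

lemma hasDerivAt_psi {ε : ℝ} (hε : 0 < ε) (r : ℝ) :
    HasDerivAt (psi ε) (r * phi' ε r) r := by
  have h := (((hasDerivAt_const r (ε^2)).div (hasDerivAt_g hε r)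
    (g_pos hε r).ne')).const_sub ε
  refine h.congr_deriv ?_
  symm
  have hg := g_pos hε r
  rw [phi']
  field_simp
  ring

lemma continuous_g (ε : ℝ) : Continuous (g ε) := by
  unfold g; exact Real.continuous_sqrt.comp (by continuity)

lemma continuous_phi' {ε : ℝ} (hε : 0 < ε) : Continuous (phi' ε) := by
  unfold phi'
  exact Continuous.div continuous_const ((continuous_g ε).pow 3)
    (fun r => pow_ne_zero 3 (g_pos hε r).ne')

lemma continuous_phi {ε : ℝ} (hε : 0 < ε) : Continuous (phi ε) := by
  unfold phi
  exact Continuous.div continuous_id (continuous_g ε) (fun r => (g_pos hε r).ne')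

lemma continuous_psi {ε : ℝ} (hε : 0 < ε) : Continuous (psi ε) := by
  unfold psi
  exact Continuous.sub continuous_const <|
    Continuous.div continuous_const (continuous_g ε) (fun r => (g_pos hε r).ne')

lemma mul_le_abs_of_abs_le_one {a b : ℝ} (h : |a| ≤ 1) : a * b ≤ |b| := by
  calc a * b ≤ |a * b| := le_abs_self _
    _ = |a| * |b| := abs_mul _ _
    _ ≤ 1 * |b| := mul_le_mul_of_nonneg_right h (abs_nonneg b)
    _ = |b| := one_mul _

lemma phi'_nonneg {ε : ℝ} (hε : 0 < ε) (r : ℝ) : 0 ≤ phi' ε r := by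
  have := g_pos hε r
  rw [phi']; positivity

end DissAux

open DissAux

set_option maxHeartbeats 3000000

/-- Dissipativity of `Ã − ωI` for large enough `ω`: with the weights
`c₁ = d(0)/(b₀ − γ(0)) > 0` and `c₂ = d(m)/(γ(m) + b_m) > 0`, there is `ω ∈ ℝ` such that
for every `λ > 0` and every `u ∈ D(Ã)` (i.e. `u ∈ C²` satisfying the Wentzell–Robin
boundary conditions), `‖u‖_𝒳 ≤ ‖u − λ(Ã − ωI)u‖_𝒳` in the weighted norm
`‖(x,x₀,x_m)‖ = ‖x‖₁ + c₁|x₀| + c₂|x_m|`. -/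
theorem dissipativity (m : ℝ) (hm : 0 < m)
    (d γ μ : ℝ → ℝ) (hd : ContDiff ℝ 1 d) (hγ : ContDiff ℝ 1 γ)
    (hdpos : ∀ s ∈ Set.Icc (0:ℝ) m, 0 < d s)
    (hμ : Continuous μ) (hμpos : ∀ s ∈ Set.Icc (0:ℝ) m, 0 ≤ μ s)
    (b0 bm c0 cm : ℝ) (hb0 : 0 < b0) (hbm : 0 < bm) (hc0 : 0 ≤ c0) (hcm : 0 ≤ cm)
    (c₁ c₂ : ℝ) (hc₁ : c₁ = d 0 / (b0 - γ 0)) (hc₂ : c₂ = d m / (γ m + bm))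
    (hc₁pos : 0 < c₁) (hc₂pos : 0 < c₂) :
    ∃ ω : ℝ, ∀ lam : ℝ, 0 < lam → ∀ u : ℝ → ℝ, ContDiff ℝ 2 u →
      -- Wentzell–Robin boundary conditions (u ∈ D(Ã))
      deriv (fun σ => d σ * deriv u σ) 0 - b0 * deriv u 0 + c0 * u 0 = 0 →
      deriv (fun σ => d σ * deriv u σ) m + bm * deriv u m + cm * u m = 0 →
      -- dissipativity estimate ‖u‖_𝒳 ≤ ‖u − λ(Ã − ωI)u‖_𝒳
      (∫ s in (0)..m, |u s|) + c₁ * |u 0| + c₂ * |u m|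
        ≤ (∫ s in (0)..m, |u s - lam * (deriv (fun σ => d σ * deriv u σ) s
              - deriv (fun σ => γ σ * u σ) s - μ s * u s - ω * u s)|)
          + c₁ * |u 0 - lam * ((b0 - γ 0) * deriv u 0
              - (μ 0 + c0 + deriv γ 0) * u 0 - ω * u 0)|
          + c₂ * |u m - lam * ((-bm - γ m) * deriv u m
              - (μ m + cm + deriv γ m) * u m - ω * u m)| := by
  classical
  set ρ0 := μ 0 + c0 + deriv γ 0 with hρ0
  set ρm := μ m + cm + deriv γ m with hρm
  set ω := max 0 (max ((γ 0 - c₁ * ρ0) / c₁) ((-γ m - c₂ * ρm) / c₂)) with hωdef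
  have hω0 : 0 ≤ ω := le_max_left _ _
  have hω1 : γ 0 - c₁ * ρ0 - c₁ * ω ≤ 0 := by
    have h1 : (γ 0 - c₁ * ρ0) / c₁ ≤ ω := le_trans (le_max_left _ _) (le_max_right _ _)
    rw [div_le_iff₀ hc₁pos] at h1
    linarith only [h1, mul_comm c₁ ω]
  have hω2 : 0 ≤ γ m + c₂ * ρm + c₂ * ω := by
    have h1 : (-γ m - c₂ * ρm) / c₂ ≤ ω := le_trans (le_max_right _ _) (le_max_right _ _)
    rw [div_le_iff₀ hc₂pos] at h1
    linarith only [h1, mul_comm c₂ ω]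
  refine ⟨ω, ?_⟩
  intro lam hlam u hu _ _
  -- smoothness facts
  have hu2 : ContDiff ℝ 2 u := hu
  rw [show (2 : WithTop ℕ∞) = 1 + 1 from by norm_num] at hu2
  have hu1 : ContDiff ℝ 1 (deriv u) := (contDiff_succ_iff_deriv.mp hu2).2.2
  have hucont : Continuous u := hu.continuous
  have hu'cont : Continuous (deriv u) := hu1.continuous
  have hudiff : Differentiable ℝ u := hu.differentiable (by norm_num)
  set F := fun σ => d σ * deriv u σ with hFdef
  set G := fun σ => γ σ * u σ with hGdef
  have hF : ContDiff ℝ 1 F := hd.mul hu1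
  have hG : ContDiff ℝ 1 G := hγ.mul (hu.of_le (by norm_num))
  have hF'c : Continuous (deriv F) := hF.continuous_deriv le_rfl
  have hG'c : Continuous (deriv G) := hG.continuous_deriv le_rfl
  have hγ'c : Continuous (deriv γ) := hγ.continuous_deriv le_rfl
  have hFcont : Continuous F := hF.continuous
  have hGcont : Continuous G := hG.continuous
  have hFd : ∀ x : ℝ, HasDerivAt F (deriv F x) x :=
    fun x => ((hF.differentiable one_ne_zero) x).hasDerivAt
  have hGd : ∀ x : ℝ, HasDerivAt G (deriv G x) x :=
    fun x => ((hG.differentiable one_ne_zero) x).hasDerivAt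
  have hγd : ∀ x : ℝ, HasDerivAt γ (deriv γ x) x :=
    fun x => ((hγ.differentiable one_ne_zero) x).hasDerivAt
  set A := fun s => deriv F s - deriv G s - μ s * u s - ω * u s with hAdef
  have hAcont : Continuous A := by
    rw [hAdef]
    exact ((hF'c.sub hG'c).sub (hμ.mul hucont)).sub (continuous_const.mul hucont)
  set f := fun s => u s - lam * A s with hfdef
  have hfcont : Continuous f := by
    rw [hfdef]; exact hucont.sub (continuous_const.mul hAcont)
  set B0 := (b0 - γ 0) * deriv u 0 - ρ0 * u 0 - ω * u 0 with hB0def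
  set Bm := (-bm - γ m) * deriv u m - ρm * u m - ω * u m with hBmdef
  set f0 := u 0 - lam * B0 with hf0def
  set fm := u m - lam * Bm with hfmdef
  show (∫ s in (0:ℝ)..m, |u s|) + c₁ * |u 0| + c₂ * |u m|
      ≤ (∫ s in (0:ℝ)..m, |f s|) + c₁ * |f0| + c₂ * |fm|
  -- constants for the ε-estimate
  set J := ∫ s in (0:ℝ)..m, |deriv γ s| with hJdef
  have hJ : 0 ≤ J := intervalIntegral.integral_nonneg hm.le (fun x _ => abs_nonneg _)
  set Cγ := |γ 0| + |γ m| + J with hCγdef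
  have hCγ : 0 ≤ Cγ := by
    rw [hCγdef]; linarith only [hJ, abs_nonneg (γ 0), abs_nonneg (γ m)]
  set K := m + c₁ + c₂ + lam * Cγ with hKdef
  have hK : 0 < K := by
    have h0 : 0 ≤ lam * Cγ := mul_nonneg hlam.le hCγ
    rw [hKdef]; linarith only [h0, hm, hc₁pos, hc₂pos]
  have key : ∀ ε : ℝ, 0 < ε →
      (∫ s in (0:ℝ)..m, |u s|) + c₁ * |u 0| + c₂ * |u m|
        ≤ ((∫ s in (0:ℝ)..m, |f s|) + c₁ * |f0| + c₂ * |fm|) + ε * K := by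
    intro ε hε
    set Φ := fun s => phi ε (u s) with hΦdef
    set Φ' := fun s => phi' ε (u s) * deriv u s with hΦ'def
    have hΦd : ∀ x : ℝ, HasDerivAt Φ (Φ' x) x := fun x => by
      exact (hasDerivAt_phi hε (u x)).comp x (hudiff x).hasDerivAt
    have hΦc : Continuous Φ := (continuous_phi hε).comp hucont
    have hΦ'c : Continuous Φ' := ((continuous_phi' hε).comp hucont).mul hu'cont
    set Ψ := fun s => psi ε (u s) with hΨdef
    set Ψ' := fun s => u s * phi' ε (u s) * deriv u s with hΨ'def
    have hΨd : ∀ x : ℝ, HasDerivAt Ψ (Ψ' x) x := fun x => by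
      exact ((hasDerivAt_psi hε (u x)).comp x (hudiff x).hasDerivAt).congr_deriv
        (by simp only [hΨ'def, mul_assoc])
    have hΨc : Continuous Ψ := (continuous_psi hε).comp hucont
    have hΨ'c : Continuous Ψ' :=
      (hucont.mul ((continuous_phi' hε).comp hucont)).mul hu'cont
    -- integration by parts for the diffusion term
    have ibp1 : ∫ x in (0:ℝ)..m, Φ x * deriv F x
        = Φ m * F m - Φ 0 * F 0 - ∫ x in (0:ℝ)..m, Φ' x * F x :=
      integral_mul_deriv_eq_deriv_mul (fun x _ => hΦd x) (fun x _ => hFd x)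
        (hΦ'c.intervalIntegrable 0 m) (hF'c.intervalIntegrable 0 m)
    have pos1 : 0 ≤ ∫ x in (0:ℝ)..m, Φ' x * F x := by
      apply intervalIntegral.integral_nonneg hm.le
      intro x hx
      have h1 := phi'_nonneg hε (u x)
      have h2 := (hdpos x hx).le
      have h3 := sq_nonneg (deriv u x)
      simp only [hΦ'def, hFdef]
      have e : phi' ε (u x) * deriv u x * (d x * deriv u x)
          = (phi' ε (u x) * d x) * (deriv u x)^2 := by ring
      rw [e]
      exact mul_nonneg (mul_nonneg h1 h2) h3
    have P3 : ∫ x in (0:ℝ)..m, Φ x * deriv F x ≤ Φ m * F m - Φ 0 * F 0 := by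
      rw [ibp1]; linarith only [pos1]
    -- integration by parts for the drift term
    have ibp2 : ∫ x in (0:ℝ)..m, Φ x * deriv G x
        = Φ m * G m - Φ 0 * G 0 - ∫ x in (0:ℝ)..m, Φ' x * G x :=
      integral_mul_deriv_eq_deriv_mul (fun x _ => hΦd x) (fun x _ => hGd x)
        (hΦ'c.intervalIntegrable 0 m) (hG'c.intervalIntegrable 0 m)
    have swap : ∫ x in (0:ℝ)..m, Φ' x * G x = ∫ x in (0:ℝ)..m, γ x * Ψ' x :=
      intervalIntegral.integral_congr (fun x _ => by
        simp only [hΦ'def, hGdef, hΨ'def]; ring)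
    have ibp3 : ∫ x in (0:ℝ)..m, γ x * Ψ' x
        = γ m * Ψ m - γ 0 * Ψ 0 - ∫ x in (0:ℝ)..m, deriv γ x * Ψ x :=
      integral_mul_deriv_eq_deriv_mul (fun x _ => hγd x) (fun x _ => hΨd x)
        (hγ'c.intervalIntegrable 0 m) (hΨ'c.intervalIntegrable 0 m)
    have tail : ∫ x in (0:ℝ)..m, -(deriv γ x * Ψ x) ≤ ε * J := by
      have h1 : ∫ x in (0:ℝ)..m, -(deriv γ x * Ψ x)
          ≤ ∫ x in (0:ℝ)..m, |deriv γ x| * ε := by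
        apply intervalIntegral.integral_mono_on hm.le
          ((hγ'c.mul hΨc).neg.intervalIntegrable 0 m)
          ((hγ'c.abs.mul continuous_const).intervalIntegrable 0 m)
        intro x _
        have h2 := psi_nonneg hε (u x)
        have h3 := psi_le hε (u x)
        have h4 := neg_abs_le (deriv γ x)
        have h5 := abs_nonneg (deriv γ x)
        simp only [hΨdef, Pi.mul_apply, Pi.neg_apply]
        nlinarith only [h2, h3, h4, h5]
      have h6 : ∫ x in (0:ℝ)..m, |deriv γ x| * ε = ε * J := by
        rw [intervalIntegral.integral_mul_const, hJdef, mul_comm]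
      linarith only [h1, h6]
    have bt1 : γ m * Ψ m ≤ ε * |γ m| := by
      have h2 := psi_nonneg hε (u m)
      have h3 := psi_le hε (u m)
      have h4 := le_abs_self (γ m)
      have h5 := abs_nonneg (γ m)
      simp only [hΨdef]
      nlinarith only [h2, h3, h4, h5]
    have bt2 : -(γ 0 * Ψ 0) ≤ ε * |γ 0| := by
      have h2 := psi_nonneg hε (u 0)
      have h3 := psi_le hε (u 0)
      have h4 := neg_abs_le (γ 0)
      have h5 := abs_nonneg (γ 0)
      simp only [hΨdef]
      nlinarith only [h2, h3, h4, h5]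
    have P4 : Φ m * G m - Φ 0 * G 0 - (∫ x in (0:ℝ)..m, Φ x * deriv G x)
        ≤ ε * Cγ := by
      have hneg : -(∫ x in (0:ℝ)..m, deriv γ x * Ψ x)
          = ∫ x in (0:ℝ)..m, -(deriv γ x * Ψ x) := by
        rw [intervalIntegral.integral_neg]
      have hexp : ε * Cγ = ε * |γ 0| + ε * |γ m| + ε * J := by
        rw [hCγdef]; ring
      rw [ibp2, swap, ibp3, hexp]
      linarith only [bt1, bt2, tail, hneg]
    -- nonnegative terms
    have P5 : 0 ≤ ∫ x in (0:ℝ)..m, Φ x * (μ x * u x) := by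
      apply intervalIntegral.integral_nonneg hm.le
      intro x hx
      have h1 := phi_mul_nonneg hε (u x)
      have h2 := hμpos x hx
      simp only [hΦdef]
      have e : phi ε (u x) * (μ x * u x) = μ x * (phi ε (u x) * u x) := by ring
      rw [e]
      exact mul_nonneg h2 h1
    have P6 : 0 ≤ ∫ x in (0:ℝ)..m, Φ x * u x := by
      apply intervalIntegral.integral_nonneg hm.le
      intro x _
      simpa only [hΦdef] using phi_mul_nonneg hε (u x)
    -- linearity
    have hsplit : ∫ x in (0:ℝ)..m, Φ x * A x
        = (∫ x in (0:ℝ)..m, Φ x * deriv F x) - (∫ x in (0:ℝ)..m, Φ x * deriv G x)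
          - (∫ x in (0:ℝ)..m, Φ x * (μ x * u x)) - ω * ∫ x in (0:ℝ)..m, Φ x * u x := by
      have e1 : ∫ x in (0:ℝ)..m, Φ x * A x
          = ∫ x in (0:ℝ)..m, (Φ x * deriv F x - Φ x * deriv G x
              - Φ x * (μ x * u x) - ω * (Φ x * u x)) :=
        intervalIntegral.integral_congr (fun x _ => by simp only [hAdef]; ring)
      rw [e1, intervalIntegral.integral_sub, intervalIntegral.integral_sub,
        intervalIntegral.integral_sub, intervalIntegral.integral_const_mul]
      · exact (hΦc.mul hF'c).intervalIntegrable 0 m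
      · exact (hΦc.mul hG'c).intervalIntegrable 0 m
      · exact ((hΦc.mul hF'c).sub (hΦc.mul hG'c)).intervalIntegrable 0 m
      · exact (hΦc.mul (hμ.mul hucont)).intervalIntegrable 0 m
      · exact (((hΦc.mul hF'c).sub (hΦc.mul hG'c)).sub
          (hΦc.mul (hμ.mul hucont))).intervalIntegrable 0 m
      · exact (continuous_const.mul (hΦc.mul hucont)).intervalIntegrable 0 m
    have hfu : ∫ x in (0:ℝ)..m, Φ x * u x
        = (∫ x in (0:ℝ)..m, Φ x * f x) + lam * ∫ x in (0:ℝ)..m, Φ x * A x := by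
      have e : ∫ x in (0:ℝ)..m, Φ x * u x
          = ∫ x in (0:ℝ)..m, (Φ x * f x + lam * (Φ x * A x)) :=
        intervalIntegral.integral_congr (fun x _ => by simp only [hfdef]; ring)
      rw [e, intervalIntegral.integral_add (f := fun x => Φ x * f x) (g := fun x => lam * (Φ x * A x)) ((hΦc.mul hfcont).intervalIntegrable 0 m)
        ((continuous_const.mul (hΦc.mul hAcont)).intervalIntegrable 0 m),
        intervalIntegral.integral_const_mul]
    -- pointwise comparisons
    have P1 : ∫ s in (0:ℝ)..m, |u s| ≤ (∫ x in (0:ℝ)..m, Φ x * u x) + ε * m := by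
      have h1 : ∫ s in (0:ℝ)..m, |u s| ≤ ∫ x in (0:ℝ)..m, (Φ x * u x + ε) := by
        apply intervalIntegral.integral_mono_on hm.le
          (hucont.abs.intervalIntegrable 0 m)
          (((hΦc.mul hucont).add continuous_const).intervalIntegrable 0 m)
        intro x _
        have := abs_sub_le_phi_mul hε (u x)
        simp only [hΦdef, Pi.mul_apply, Pi.add_apply]
        linarith only [this]
      have h2 : ∫ x in (0:ℝ)..m, (Φ x * u x + ε)
          = (∫ x in (0:ℝ)..m, Φ x * u x) + ε * m := by
        rw [intervalIntegral.integral_add (f := fun x => Φ x * u x) (g := fun _ => ε) ((hΦc.mul hucont).intervalIntegrable 0 m)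
          (intervalIntegrable_const), intervalIntegral.integral_const, smul_eq_mul]
        ring
      linarith only [h1, h2]
    have P2 : ∫ x in (0:ℝ)..m, Φ x * f x ≤ ∫ s in (0:ℝ)..m, |f s| := by
      apply intervalIntegral.integral_mono_on hm.le
        ((hΦc.mul hfcont).intervalIntegrable 0 m)
        (hfcont.abs.intervalIntegrable 0 m)
      intro x _
      have h1 : |Φ x| ≤ 1 := by
        rw [hΦdef]; exact abs_phi_le_one hε (u x)
      exact mul_le_abs_of_abs_le_one h1
    -- boundary estimates
    have hb0 : |u 0| ≤ |f0| + lam * (Φ 0 * B0) + ε := by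
      have e : Φ 0 * u 0 = Φ 0 * f0 + lam * (Φ 0 * B0) := by
        rw [hf0def]; ring
      have h1 : |u 0| - ε ≤ Φ 0 * u 0 := by
        simpa only [hΦdef] using abs_sub_le_phi_mul hε (u 0)
      have h2 : Φ 0 * f0 ≤ |f0| := by
        refine mul_le_abs_of_abs_le_one ?_
        rw [hΦdef]; exact abs_phi_le_one hε (u 0)
      linarith only [e ▸ h1, h2]
    have hbm' : |u m| ≤ |fm| + lam * (Φ m * Bm) + ε := by
      have e : Φ m * u m = Φ m * fm + lam * (Φ m * Bm) := by
        rw [hfmdef]; ring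
      have h1 : |u m| - ε ≤ Φ m * u m := by
        simpa only [hΦdef] using abs_sub_le_phi_mul hε (u m)
      have h2 : Φ m * fm ≤ |fm| := by
        refine mul_le_abs_of_abs_le_one ?_
        rw [hΦdef]; exact abs_phi_le_one hε (u m)
      linarith only [e ▸ h1, h2]
    have hb0c : c₁ * |u 0| ≤ c₁ * |f0| + lam * (c₁ * (Φ 0 * B0)) + c₁ * ε := by
      have h := mul_le_mul_of_nonneg_left hb0 hc₁pos.le
      have e2 : c₁ * (|f0| + lam * (Φ 0 * B0) + ε)
          = c₁ * |f0| + lam * (c₁ * (Φ 0 * B0)) + c₁ * ε := by ring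
      linarith only [e2 ▸ h]
    have hbmc : c₂ * |u m| ≤ c₂ * |fm| + lam * (c₂ * (Φ m * Bm)) + c₂ * ε := by
      have h := mul_le_mul_of_nonneg_left hbm' hc₂pos.le
      have e2 : c₂ * (|fm| + lam * (Φ m * Bm) + ε)
          = c₂ * |fm| + lam * (c₂ * (Φ m * Bm)) + c₂ * ε := by ring
      linarith only [e2 ▸ h]
    -- the boundary cancellations
    have hne0 : b0 - γ 0 ≠ 0 := by
      intro h
      rw [h, div_zero] at hc₁
      exact hc₁pos.ne' hc₁
    have hcd0 : c₁ * (b0 - γ 0) = d 0 := by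
      rw [hc₁]; field_simp
    have hnem : γ m + bm ≠ 0 := by
      intro h
      rw [h, div_zero] at hc₂
      exact hc₂pos.ne' hc₂
    have hcdm : c₂ * (γ m + bm) = d m := by
      rw [hc₂]; field_simp
    have hE0 : Φ 0 * G 0 - Φ 0 * F 0 + c₁ * (Φ 0 * B0) ≤ 0 := by
      have hkey : Φ 0 * G 0 - Φ 0 * F 0 + c₁ * (Φ 0 * B0)
          = (Φ 0 * u 0) * (γ 0 - c₁ * ρ0 - c₁ * ω) := by
        simp only [hGdef, hFdef, hB0def]
        linear_combination (Φ 0 * deriv u 0) * hcd0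
      rw [hkey]
      have h1 : 0 ≤ Φ 0 * u 0 := by
        simpa only [hΦdef] using phi_mul_nonneg hε (u 0)
      nlinarith only [h1, hω1]
    have hEm : Φ m * F m - Φ m * G m + c₂ * (Φ m * Bm) ≤ 0 := by
      have hkey : Φ m * F m - Φ m * G m + c₂ * (Φ m * Bm)
          = (Φ m * u m) * (-(γ m + c₂ * ρm + c₂ * ω)) := by
        simp only [hGdef, hFdef, hBmdef]
        linear_combination (-(Φ m * deriv u m)) * hcdm
      rw [hkey]
      have h1 : 0 ≤ Φ m * u m := by
        simpa only [hΦdef] using phi_mul_nonneg hε (u m)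
      nlinarith only [h1, hω2]
    -- assemble
    have hωP6 : 0 ≤ ω * ∫ x in (0:ℝ)..m, Φ x * u x := mul_nonneg hω0 P6
    have hA1 : (∫ x in (0:ℝ)..m, Φ x * A x) + c₁ * (Φ 0 * B0) + c₂ * (Φ m * Bm)
        ≤ (Φ 0 * G 0 - Φ 0 * F 0 + c₁ * (Φ 0 * B0))
          + (Φ m * F m - Φ m * G m + c₂ * (Φ m * Bm)) + ε * Cγ := by
      rw [hsplit]
      linarith only [P3, P4, P5, hωP6]
    have hA2 : (∫ x in (0:ℝ)..m, Φ x * A x) + c₁ * (Φ 0 * B0) + c₂ * (Φ m * Bm)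
        ≤ ε * Cγ := by linarith only [hA1, hE0, hEm]
    have hA3 : lam * ((∫ x in (0:ℝ)..m, Φ x * A x) + c₁ * (Φ 0 * B0) + c₂ * (Φ m * Bm))
        ≤ lam * (ε * Cγ) := mul_le_mul_of_nonneg_left hA2 hlam.le
    have hKexp : ε * K = ε * m + c₁ * ε + c₂ * ε + lam * (ε * Cγ) := by
      rw [hKdef]; ring
    have hdist : lam * ((∫ x in (0:ℝ)..m, Φ x * A x) + c₁ * (Φ 0 * B0) + c₂ * (Φ m * Bm))
        = lam * (∫ x in (0:ℝ)..m, Φ x * A x) + lam * (c₁ * (Φ 0 * B0))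
          + lam * (c₂ * (Φ m * Bm)) := by ring
    rw [hKexp]
    linarith only [P1, hfu, P2, hb0c, hbmc, hdist ▸ hA3]
  -- let ε → 0
  refine le_of_forall_pos_le_add ?_
  intro δ hδ
  have h1 := key (δ / K) (div_pos hδ hK)
  have h2 : δ / K * K = δ := div_mul_cancel₀ δ hK.ne'
  linarith only [h1, h2]
end

section
/- Let λ > 0, ω ∈ ℝ sufficiently large, and suppose h ∈ 𝒳 is nonnegative and u ∈ D(Ã) solves u − λ(Ã − ωI)u = h, where inequality (negpart) holds: ‖u⁻‖₁ plus nonnegative boundary terms involving u(0), u(m) is bounded above by terms that are all nonpositive when h ≥ 0. Then u⁻ = 0 a.e., i.e., u ≥ 0. Consequently the resolvent R(λ, Ã − ωI) is a positive operator for λ large enough. -/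
open MeasureTheory intervalIntegral

section Helpers
open Set Filter Topology

/-- At a left-endpoint minimum, the derivative is nonnegative. -/
lemma deriv_nonneg_left_min (f : ℝ → ℝ) (a b : ℝ) (hab : a < b)
    (hf : DifferentiableAt ℝ f a) (hmin : ∀ s ∈ Set.Ioo a b, f a ≤ f s) :
    0 ≤ deriv f a := by
  have ht : Tendsto (slope f a) (𝓝[>] a) (𝓝 (deriv f a)) :=
    (hasDerivAt_iff_tendsto_slope.mp hf.hasDerivAt).mono_left
      (nhdsWithin_mono _ (fun x hx => ne_of_gt hx))
  refine ge_of_tendsto ht ?_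
  filter_upwards [Ioo_mem_nhdsGT_of_mem (⟨le_refl a, hab⟩ : a ∈ Set.Ico a b)] with s hs
  rw [slope_def_field]
  exact div_nonneg (sub_nonneg.2 (hmin s hs)) (sub_pos.2 hs.1).le

/-- At a right-endpoint minimum, the derivative is nonpositive. -/
lemma deriv_nonpos_right_min (f : ℝ → ℝ) (a b : ℝ) (hab : a < b)
    (hf : DifferentiableAt ℝ f b) (hmin : ∀ s ∈ Set.Ioo a b, f b ≤ f s) :
    deriv f b ≤ 0 := by
  have ht : Tendsto (slope f b) (𝓝[<] b) (𝓝 (deriv f b)) :=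
    (hasDerivAt_iff_tendsto_slope.mp hf.hasDerivAt).mono_left
      (nhdsWithin_mono _ (fun x hx => ne_of_lt hx))
  refine le_of_tendsto ht ?_
  filter_upwards [Ioo_mem_nhdsLT_of_mem (⟨hab, le_refl b⟩ : b ∈ Set.Ioc a b)] with s hs
  rw [slope_def_field]
  exact div_nonpos_of_nonneg_of_nonpos (sub_nonneg.2 (hmin s hs)) (sub_neg.2 hs.2).le

/-- Second-derivative test at an interior minimum. -/
lemma second_deriv_nonneg_interior_min (f : ℝ → ℝ) (hf : ContDiff ℝ 2 f)
    (a b c : ℝ) (hac : a < c) (hcb : c < b)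
    (hmin : ∀ s ∈ Set.Icc a b, f c ≤ f s) :
    0 ≤ deriv (deriv f) c := by
  have hloc : IsLocalMin f c := by
    filter_upwards [Icc_mem_nhds hac hcb] using hmin
  have hd1 : deriv f c = 0 := hloc.deriv_eq_zero
  have hder : ContDiff ℝ 1 (deriv f) := by
    have : ContDiff ℝ (1 + 1) f := by exact_mod_cast hf
    exact (contDiff_succ_iff_deriv.mp this).2.2
  by_contra hneg
  push_neg at hneg
  have ht : Tendsto (slope (deriv f) c) (𝓝[>] c) (𝓝 (deriv (deriv f) c)) :=
    (hasDerivAt_iff_tendsto_slope.mp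
      ((hder.differentiable one_ne_zero).differentiableAt.hasDerivAt)).mono_left
      (nhdsWithin_mono _ (fun x hx => ne_of_gt hx))
  have hev : ∀ᶠ s in 𝓝[>] c, deriv f s < 0 := by
    filter_upwards [ht.eventually (gt_mem_nhds hneg), self_mem_nhdsWithin] with s hs hs'
    rw [slope_def_field, hd1, sub_zero] at hs
    have hsc : 0 < s - c := sub_pos.2 hs'
    rw [div_lt_iff₀ hsc] at hs
    linarith
  rcases mem_nhdsGT_iff_exists_Ioo_subset.mp hev with ⟨t, ht', hsub⟩
  set b' := min t b with hb'
  have hcb' : c < b' := lt_min ht' hcb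
  have hanti : StrictAntiOn f (Set.Icc c b') := by
    refine strictAntiOn_of_deriv_neg (convex_Icc _ _)
      (hf.continuous.continuousOn) ?_
    intro x hx
    rw [interior_Icc] at hx
    exact hsub ⟨hx.1, lt_of_lt_of_le hx.2 (min_le_left _ _)⟩
  have hx : (c + b') / 2 ∈ Set.Ioo c b' := ⟨by linarith, by linarith⟩
  have h1 : f ((c + b') / 2) < f c :=
    hanti ⟨le_refl c, hcb'.le⟩ ⟨hx.1.le, hx.2.le⟩ hx.1
  have h2 : f c ≤ f ((c + b') / 2) := by
    refine hmin _ ⟨by linarith, ?_⟩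
    have : b' ≤ b := min_le_right _ _
    linarith [hx.2]
  linarith

end Helpers

/-- Positivity of the resolvent: for `ω` sufficiently large and any `λ > 0`, if
`h ∈ 𝒳` is nonnegative and `u ∈ D(Ã)` solves the resolvent equation
`u − λ(Ã − ωI)u = h` (in the interior and at both boundary components), then `u ≥ 0`
on `[0,m]`; i.e. `R(λ, Ã − ωI)` is a positive operator. -/
theorem resolvent_positive (m : ℝ) (hm : 0 < m)
    (d γ μ : ℝ → ℝ) (hd : ContDiff ℝ 1 d) (hγ : ContDiff ℝ 1 γ)
    (hdpos : ∀ s ∈ Set.Icc (0:ℝ) m, 0 < d s)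
    (hμ : Continuous μ) (hμpos : ∀ s ∈ Set.Icc (0:ℝ) m, 0 ≤ μ s)
    (b0 bm c0 cm : ℝ) (hb0 : 0 < b0) (hbm : 0 < bm) (hc0 : 0 ≤ c0) (hcm : 0 ≤ cm)
    (hc₁pos : 0 < d 0 / (b0 - γ 0)) (hc₂pos : 0 < d m / (γ m + bm)) :
    ∃ ω₀ : ℝ, ∀ ω : ℝ, ω₀ ≤ ω → ∀ lam : ℝ, 0 < lam →
      ∀ u h : ℝ → ℝ, ContDiff ℝ 2 u → Continuous h →
      -- h is nonnegative (in all components of 𝒳)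
      (∀ s ∈ Set.Icc (0:ℝ) m, 0 ≤ h s) →
      -- u ∈ D(Ã): Wentzell–Robin boundary conditions
      deriv (fun σ => d σ * deriv u σ) 0 - b0 * deriv u 0 + c0 * u 0 = 0 →
      deriv (fun σ => d σ * deriv u σ) m + bm * deriv u m + cm * u m = 0 →
      -- resolvent equation in the interior
      (∀ s ∈ Set.Ioo (0:ℝ) m,
        u s - lam * (deriv (fun σ => d σ * deriv u σ) s
          - deriv (fun σ => γ σ * u σ) s - μ s * u s - ω * u s) = h s) →
      -- resolvent equation in the two boundary components
      u 0 - lam * ((b0 - γ 0) * deriv u 0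
        - (μ 0 + c0 + deriv γ 0) * u 0 - ω * u 0) = h 0 →
      u m - lam * ((-bm - γ m) * deriv u m
        - (μ m + cm + deriv γ m) * u m - ω * u m) = h m →
      -- conclusion: u ≥ 0, i.e. u⁻ = 0
      ∀ s ∈ Set.Icc (0:ℝ) m, 0 ≤ u s := by
  
  -- positivity of the boundary coefficients
  have hd0 : 0 < d 0 := hdpos 0 ⟨le_refl 0, hm.le⟩
  have hdm : 0 < d m := hdpos m ⟨hm.le, le_refl m⟩
  have hb0' : 0 < b0 - γ 0 := by
    rcases lt_trichotomy (b0 - γ 0) 0 with h | h | h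
    · exact absurd (div_neg_of_pos_of_neg hd0 h) (not_lt.2 hc₁pos.le)
    · rw [h, div_zero] at hc₁pos; linarith
    · exact h
  have hbm' : 0 < γ m + bm := by
    rcases lt_trichotomy (γ m + bm) 0 with h | h | h
    · exact absurd (div_neg_of_pos_of_neg hdm h) (not_lt.2 hc₂pos.le)
    · rw [h, div_zero] at hc₂pos; linarith
    · exact h
  -- choose ω₀ dominating -(γ' + μ) on [0, m]
  have hγ' : Continuous (deriv γ) := (contDiff_one_iff_deriv.mp hγ).2
  obtain ⟨s₁, hs₁, hmax⟩ := isCompact_Icc.exists_isMaxOn (Set.nonempty_Icc.mpr hm.le)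
    ((hγ'.add hμ).neg.continuousOn)
  refine ⟨-(deriv γ s₁ + μ s₁), ?_⟩
  intro ω hω lam hlam u h hu hh hhpos hbc0 hbcm heq heq0 heqm
  have key : ∀ s ∈ Set.Icc (0:ℝ) m, 0 ≤ deriv γ s + μ s + ω := by
    intro s hs
    have := hmax hs
    simp only [Set.mem_setOf_eq, Pi.neg_apply, Pi.add_apply] at this
    linarith [this]
  -- differentiability facts
  have hud : Differentiable ℝ u := hu.differentiable (by norm_num)
  have hu2 : ContDiff ℝ (1 + 1) u := by exact_mod_cast hu
  have hud' : ContDiff ℝ 1 (deriv u) := (contDiff_succ_iff_deriv.mp hu2).2.2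
  have hud'' : Differentiable ℝ (deriv u) := hud'.differentiable one_ne_zero
  -- minimum of u on the compact interval
  obtain ⟨s₀, hs₀, hmin⟩ := isCompact_Icc.exists_isMinOn (Set.nonempty_Icc.mpr hm.le)
    (hu.continuous.continuousOn)
  have hmin' : ∀ s ∈ Set.Icc (0:ℝ) m, u s₀ ≤ u s := fun s hs => hmin hs
  suffices h0 : 0 ≤ u s₀ by
    intro s hs; exact le_trans h0 (hmin' s hs)
  by_contra hneg
  push_neg at hneg
  rcases hs₀ with ⟨hs₀l, hs₀r⟩
  rcases eq_or_lt_of_le hs₀l with h0eq | h0lt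
  · -- minimum at the left endpoint 0
    subst h0eq
    have hdu0 : 0 ≤ deriv u 0 := by
      refine deriv_nonneg_left_min u 0 m hm (hud 0) ?_
      intro s hs; exact hmin' s ⟨hs.1.le, hs.2.le⟩
    have hk0 : 0 ≤ deriv γ 0 + μ 0 + ω := key 0 ⟨le_refl 0, hm.le⟩
    have hh0 : 0 ≤ h 0 := hhpos 0 ⟨le_refl 0, hm.le⟩
    nlinarith [mul_nonneg (mul_nonneg hlam.le (by linarith : (0:ℝ) ≤ μ 0 + c0 + deriv γ 0 + ω))
        (neg_nonneg.mpr hneg.le),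
      mul_nonneg (mul_nonneg hlam.le hb0'.le) hdu0]
  rcases eq_or_lt_of_le hs₀r with hmeq | hmlt
  · -- minimum at the right endpoint m
    subst hmeq
    have hdum : deriv u s₀ ≤ 0 := by
      refine deriv_nonpos_right_min u 0 s₀ h0lt (hud s₀) ?_
      intro s hs; exact hmin' s ⟨hs.1.le, hs.2.le⟩
    have hkm : 0 ≤ deriv γ s₀ + μ s₀ + ω := key s₀ ⟨h0lt.le, le_refl s₀⟩
    have hhm : 0 ≤ h s₀ := hhpos s₀ ⟨h0lt.le, le_refl s₀⟩
    nlinarith [mul_nonneg (mul_nonneg hlam.le (by linarith : (0:ℝ) ≤ μ s₀ + cm + deriv γ s₀ + ω))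
        (neg_nonneg.mpr hneg.le),
      mul_nonneg (mul_nonneg hlam.le hbm'.le) (neg_nonneg.mpr hdum)]
  · -- interior minimum
    have hloc : IsLocalMin u s₀ := by
      filter_upwards [Icc_mem_nhds h0lt hmlt] using hmin'
    have hdu0 : deriv u s₀ = 0 := hloc.deriv_eq_zero
    have hsec : 0 ≤ deriv (deriv u) s₀ :=
      second_deriv_nonneg_interior_min u hu 0 m s₀ h0lt hmlt hmin'
    have hD1 : deriv (fun σ => d σ * deriv u σ) s₀
        = deriv d s₀ * deriv u s₀ + d s₀ * deriv (deriv u) s₀ :=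
      deriv_mul ((hd.differentiable one_ne_zero).differentiableAt) (hud'' s₀)
    have hD2 : deriv (fun σ => γ σ * u σ) s₀
        = deriv γ s₀ * u s₀ + γ s₀ * deriv u s₀ :=
      deriv_mul ((hγ.differentiable one_ne_zero).differentiableAt) (hud s₀)
    have heqs := heq s₀ ⟨h0lt, hmlt⟩
    rw [hD1, hD2, hdu0] at heqs
    have hks : 0 ≤ deriv γ s₀ + μ s₀ + ω := key s₀ ⟨h0lt.le, hmlt.le⟩
    have hhs : 0 ≤ h s₀ := hhpos s₀ ⟨h0lt.le, hmlt.le⟩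
    have hds : 0 < d s₀ := hdpos s₀ ⟨h0lt.le, hmlt.le⟩
    nlinarith [mul_nonneg (mul_nonneg hlam.le hks) (neg_nonneg.mpr hneg.le),
      mul_nonneg (mul_nonneg hlam.le hds.le) hsec]
end
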